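/- Let α0, α1 be complex constants, U an open subset of ℂ with 0 ∉ U, and let u : U → ℂ be three times differentiable with u'(t) ≠ 0 for all t ∈ U, satisfying equation (E) on U. Define x := u, y := u', z := (u'' − ((2α1−1)u + α0)/t²)/u'. Then the triple (x, y, z) satisfies system (S) on U with parameters (α0, α1). -/

import Mathlib

/-- The triple `(x, y, z)` satisfies the polynomial system (S) on `U` with
parameters `(α0, α1)`:
`x′ = y`, `y′ = yz + ((2α1−1)x + α0)/t²`,
`z′ = −z²/2 − 4x/t − 4y − 2z/t + (2α1−1)(2α1−3)/(2t²) + 2/t`. -/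
def SysS (α0 α1 : ℂ) (U : Set ℂ) (x y z : ℂ → ℂ) : Prop :=
  ∀ t ∈ U,
    HasDerivAt x (y t) t ∧
    HasDerivAt y (y t * z t + ((2 * α1 - 1) * x t + α0) / t ^ 2) t ∧
    HasDerivAt z (-(z t) ^ 2 / 2 - 4 * x t / t - 4 * y t - 2 * z t / t
      + (2 * α1 - 1) * (2 * α1 - 3) / (2 * t ^ 2) + 2 / t) t

/-- If `u` is three times differentiable with `u' ≠ 0` and satisfies equation (E)
on `U`, then `(x, y, z) = (u, u', (u'' − ((2α1−1)u + α0)/t²)/u')` satisfies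
system (S) on `U` with parameters `(α0, α1)`. -/
theorem eqE_to_sysS
    (α0 α1 : ℂ) (U : Set ℂ) (hU : IsOpen U) (h0 : (0 : ℂ) ∉ U)
    (u : ℂ → ℂ)
    (hu1 : ∀ t ∈ U, DifferentiableAt ℂ u t)
    (hu2 : ∀ t ∈ U, DifferentiableAt ℂ (deriv u) t)
    (hu3 : ∀ t ∈ U, DifferentiableAt ℂ (deriv (deriv u)) t)
    (hne : ∀ t ∈ U, deriv u t ≠ 0)
    (hE : ∀ t ∈ U,
      deriv (deriv (deriv u)) t =
        (t ^ 2 * deriv (deriv u) t - (2 * α1 - 1) * u t - α0) *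
            (t ^ 2 * deriv (deriv u) t + (2 * α1 - 1) * u t + α0) /
              (2 * t ^ 4 * deriv u t)
          - 4 * deriv u t * (u t + t * deriv u t) / t
          + ((4 * t + (2 * α1 - 1) ^ 2) / (2 * t ^ 2)) * deriv u t
          - (2 / t) * deriv (deriv u) t) :
    SysS α0 α1 U u (deriv u)
      (fun t => (deriv (deriv u) t - ((2 * α1 - 1) * u t + α0) / t ^ 2) / deriv u t) := by
  intro t ht
  have ht0 : t ≠ 0 := fun h => h0 (h ▸ ht)
  have h1 := (hu1 t ht).hasDerivAt
  have h2 := (hu2 t ht).hasDerivAt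
  have h3 := (hu3 t ht).hasDerivAt
  have hb := hne t ht
  refine ⟨h1, ?_, ?_⟩
  · refine h2.congr_deriv (Eq.symm ?_)
    field_simp
    ring
  · have hpow : HasDerivAt (fun s : ℂ => s ^ 2) ((2 : ℕ) * t ^ (2 - 1)) t := hasDerivAt_pow 2 t
    have hnum : HasDerivAt (fun s => deriv (deriv u) s - ((2 * α1 - 1) * u s + α0) / s ^ 2)
        (deriv (deriv (deriv u)) t -
          (((2 * α1 - 1) * deriv u t + 0) * t ^ 2 -
            ((2 * α1 - 1) * u t + α0) * ((2 : ℕ) * t ^ (2 - 1))) / (t ^ 2) ^ 2) t :=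
      h3.sub ((((h1.const_mul (2 * α1 - 1)).add (hasDerivAt_const t α0)).div hpow
        (pow_ne_zero 2 ht0)))
    have hz := hnum.div h2 hb
    refine hz.congr_deriv (Eq.symm ?_)
    rw [hE t ht]
    linear_combination
      (((-1)/2) * (deriv u t) * (deriv u t)⁻¹^3 * (deriv (deriv u) t)^2 + (4) * (deriv u t)^3 * (deriv u t)⁻¹^2 + (-2) * t⁻¹ * (deriv u t)^2 * (deriv u t)⁻¹^2 + (-1) * t⁻¹^2 * (deriv u t)^2 * (deriv u t)⁻¹^2 + (2) * t⁻¹^2 * (deriv u t)^2 * (deriv u t)⁻¹^2 * α1 + (-2) * t⁻¹^3 * (deriv u t) * (deriv u t)⁻¹^2 * α0 + (2) * t⁻¹^3 * (deriv u t) * (deriv u t)⁻¹^2 * (u t) + (-4) * t⁻¹^3 * (deriv u t) * (deriv u t)⁻¹^2 * (u t) * α1 + ((-1)/2) * t * t⁻¹ * (deriv u t) * (deriv u t)⁻¹^3 * (deriv (deriv u) t)^2 + (-1) * t * t⁻¹^3 * (deriv u t)^2 * (deriv u t)⁻¹^2 + (2) * t * t⁻¹^3 * (deriv u t)^2 * (deriv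 u t)⁻¹^2 * α1 + ((-1)/2) * t^2 * t⁻¹^2 * (deriv u t) * (deriv u t)⁻¹^3 * (deriv (deriv u) t)^2 + ((-1)/2) * t^3 * t⁻¹^3 * (deriv u t) * (deriv u t)⁻¹^3 * (deriv (deriv u) t)^2) * mul_inv_cancel₀ ht0 +
      (((-1)/2) * (deriv u t)⁻¹^2 * (deriv (deriv u) t)^2 + (4) * (deriv u t) + (4) * (deriv u t)^2 * (deriv u t)⁻¹ + (-2) * t⁻¹ + (4) * t⁻¹ * (u t) + (2) * t⁻¹ * (deriv u t)⁻¹ * (deriv (deriv u) t) + (-2) * t⁻¹ * (deriv u t) * (deriv u t)⁻¹ + (4) * t⁻¹ * (deriv u t) * (deriv u t)⁻¹ * (u t) + ((-3)/2) * t⁻¹^2 + (4) * t⁻¹^2 * α1 + (-2) * t⁻¹^2 * α1^2 + ((-3)/2) * t⁻¹^2 * (deriv u t) * (deriv u t)⁻¹ + (4) * t⁻¹^2 * (deriv u t) * (deriv u t)⁻¹ * α1 + (-2) * t⁻¹^2 * (deriv u t) * (deriv u t)⁻¹ * α1^2 + (-2) * t⁻¹^3 * (deriv u t)⁻¹ *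 α0 + (2) * t⁻¹^3 * (deriv u t)⁻¹ * (u t) + (-4) * t⁻¹^3 * (deriv u t)⁻¹ * (u t) * α1 + ((1)/2) * t⁻¹^4 * (deriv u t)⁻¹^2 * α0^2 + (-1) * t⁻¹^4 * (deriv u t)⁻¹^2 * (u t) * α0 + (2) * t⁻¹^4 * (deriv u t)⁻¹^2 * (u t) * α0 * α1 + ((1)/2) * t⁻¹^4 * (deriv u t)⁻¹^2 * (u t)^2 + (-2) * t⁻¹^4 * (deriv u t)⁻¹^2 * (u t)^2 * α1 + (2) * t⁻¹^4 * (deriv u t)⁻¹^2 * (u t)^2 * α1^2) * mul_inv_cancel₀ hb
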